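/- arXiv:2410.22337 — 2 statements merged into one kernel-verified Lean document; each statement's English description precedes it below -/
import Mathlib

section
/- Let n ∈ ℕ and let {t_{k,2^n} : 1 ≤ k ≤ 2^n} be a finite sequence of real numbers. Then K_{2^n}^T = D_{2^n} · Σ_{k=1}^{2^n} t_{k,2^n} − w_{2^n−1} · t_{1,2^n} · (2^n − 1) · K_{2^n−1} + w_{2^n−1} · Σ_{k=1}^{2^n−2} Δt_{2^n−k−1,2^n} · k · K_k (as functions on G). -/
open MeasureTheory
open scoped ENNReal

noncomputable section

/-- The dyadic group: countable product of `ZMod 2`. -/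
abbrev G : Type := ℕ → ZMod 2

instance : TopologicalSpace (ZMod 2) := ⊥
instance : DiscreteTopology (ZMod 2) := ⟨rfl⟩
instance : IsTopologicalAddGroup (ZMod 2) :=
  { continuous_add := continuous_of_discreteTopology
    continuous_neg := continuous_of_discreteTopology }

instance : MeasurableSpace G := borel G
instance : BorelSpace G := ⟨rfl⟩

/-- The normalized Haar measure on the dyadic group. -/
def haarG : Measure G :=
  Measure.addHaarMeasure ⟨⟨Set.univ, isCompact_univ⟩, by simp⟩

/-- Rademacher functions. -/
def rade (k : ℕ) (x : G) : ℝ := (-1 : ℝ) ^ (x k).val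

/-- Walsh–Paley functions. -/
def walsh (n : ℕ) (x : G) : ℝ :=
  ∏ k ∈ Finset.range (n + 1), if n.testBit k then rade k x else 1

/-- Dirichlet kernels. -/
def Dker (n : ℕ) (x : G) : ℝ := ∑ k ∈ Finset.range n, walsh k x

/-- Fejér kernels. -/
def Fker (n : ℕ) (x : G) : ℝ := (1 / n : ℝ) * ∑ k ∈ Finset.Icc 1 n, Dker k x

/-- Walsh–Fourier coefficients. -/
def fourierCoef (f : G → ℝ) (j : ℕ) : ℝ := ∫ x, f x * walsh j x ∂haarG

/-- Partial sums of the Walsh–Fourier series. -/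
def partialSum (f : G → ℝ) (k : ℕ) (x : G) : ℝ :=
  ∑ j ∈ Finset.range k, fourierCoef f j * walsh j x

/-- Fejér means. -/
def fejerMean (n : ℕ) (f : G → ℝ) (x : G) : ℝ :=
  (1 / n : ℝ) * ∑ k ∈ Finset.Icc 1 n, partialSum f k x

/-- Matrix transform means. -/
def sigmaT (t : ℕ → ℕ → ℝ) (n : ℕ) (f : G → ℝ) (x : G) : ℝ :=
  ∑ k ∈ Finset.Icc 1 n, t k n * partialSum f k x

/-- Matrix transform kernels. -/
def KT (t : ℕ → ℕ → ℝ) (n : ℕ) (x : G) : ℝ :=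
  ∑ k ∈ Finset.Icc 1 n, t k n * Dker k x

/-- `Δ t_{k,n} = t_{k,n} - t_{k+1,n}` with convention `t_{n+1,n} = 0`. -/
def deltaT (t : ℕ → ℕ → ℝ) (k n : ℕ) : ℝ :=
  t k n - (if k + 1 ≤ n then t (k + 1) n else 0)

/-- `|x| = ∑ x_i 2^{-(i+1)}` for `x ∈ G`. -/
def normG (x : G) : ℝ := ∑' i, ((x i).val : ℝ) / 2 ^ (i + 1)

/-- The `L_p` modulus of continuity. -/
def omegaP (p : ℝ≥0∞) (f : G → ℝ) (δ : ℝ) : ℝ≥0∞ :=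
  ⨆ (t : G) (_ : normG t < δ), eLpNorm (fun x => f (x + t) - f x) p haarG

/-- Dyadic intervals `I_n` (around `0`). -/
def Iset (n : ℕ) : Set G := {y | ∀ i < n, y i = 0}

/-- `e_t ∈ G`: the `t`-th coordinate is `1`, the rest are `0`. -/
def eG (t : ℕ) : G := fun i => if i = t then 1 else 0

/-- The order `|n|` of a positive integer: `2^{|n|} ≤ n < 2^{|n|+1}`. -/
def ord (n : ℕ) : ℕ := Nat.log 2 n


lemma rade_sq (k : ℕ) (x : G) : rade k x * rade k x = 1 := by
  unfold rade
  rw [← pow_add]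
  exact Even.neg_one_pow ⟨(x k).val, by ring⟩

lemma prod_testbit_ext (j : ℕ) (x : G) {A B : ℕ} (hA : j < 2 ^ A) (hAB : A ≤ B) :
    ∏ k ∈ Finset.range A, (if j.testBit k then rade k x else 1)
      = ∏ k ∈ Finset.range B, (if j.testBit k then rade k x else 1) := by
  apply Finset.prod_subset (Finset.range_subset_range.2 hAB)
  intro k hk hk'
  have hk2 : A ≤ k := by simpa using hk'
  have : j.testBit k = false :=
    Nat.testBit_eq_false_of_lt (lt_of_lt_of_le hA (Nat.pow_le_pow_right (by norm_num) hk2))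
  simp [this]

lemma walsh_ext (j M : ℕ) (h : j < 2 ^ M) (x : G) :
    walsh j x = ∏ k ∈ Finset.range M, (if j.testBit k then rade k x else 1) := by
  unfold walsh
  rw [prod_testbit_ext j x (lt_of_lt_of_le (Nat.lt_two_pow_self (n := j))
        (Nat.pow_le_pow_right (by norm_num) (Nat.le_succ j))) (le_max_left (j+1) M),
      prod_testbit_ext j x h (le_max_right (j+1) M)]

lemma walsh_reflect (n m : ℕ) (hm : m < 2 ^ n) (x : G) :
    walsh (2 ^ n - 1 - m) x = walsh (2 ^ n - 1) x * walsh m x := by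
  rw [walsh_ext _ n (by omega) x, walsh_ext _ n (by omega) x, walsh_ext m n hm x,
      ← Finset.prod_mul_distrib]
  apply Finset.prod_congr rfl
  intro k hk
  have hkn : k < n := Finset.mem_range.1 hk
  have h1 : (2 ^ n - 1).testBit k = true := by simp [hkn]
  have h2 : (2 ^ n - 1 - m).testBit k = !m.testBit k := by
    have : 2 ^ n - 1 - m = 2 ^ n - (m + 1) := by omega
    rw [this, Nat.testBit_two_pow_sub_succ hm]
    simp [hkn]
  cases hb : m.testBit k <;> simp [h1, h2, hb, rade_sq]

lemma dker_reflect (n j : ℕ) (hj : j ≤ 2 ^ n) (x : G) :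
    Dker (2 ^ n - j) x = Dker (2 ^ n) x - walsh (2 ^ n - 1) x * Dker j x := by
  have key : ∑ k ∈ Finset.Ico (2 ^ n - j) (2 ^ n), walsh k x
      = walsh (2 ^ n - 1) x * Dker j x := by
    rw [Dker, Finset.mul_sum]
    refine Finset.sum_nbij' (fun k => 2 ^ n - 1 - k) (fun i => 2 ^ n - 1 - i) ?_ ?_ ?_ ?_ ?_
    · intro k hk
      have := Finset.mem_Ico.1 hk
      simp only [Finset.mem_range]; omega
    · intro i hi
      have := Finset.mem_range.1 hi
      have h1 : 1 ≤ 2 ^ n := Nat.one_le_two_pow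
      simp only [Finset.mem_Ico]; omega
    · intro k hk
      have := Finset.mem_Ico.1 hk
      show 2 ^ n - 1 - (2 ^ n - 1 - k) = k; omega
    · intro i hi
      have := Finset.mem_range.1 hi
      have h1 : 1 ≤ 2 ^ n := Nat.one_le_two_pow
      show 2 ^ n - 1 - (2 ^ n - 1 - i) = i; omega
    · intro k hk
      have hk' := Finset.mem_Ico.1 hk
      have hm : 2 ^ n - 1 - k < 2 ^ n := by omega
      have := walsh_reflect n (2 ^ n - 1 - k) hm x
      have he : 2 ^ n - 1 - (2 ^ n - 1 - k) = k := by omega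
      rw [he] at this
      rw [← this]
  have split : Dker (2 ^ n) x = Dker (2 ^ n - j) x
      + ∑ k ∈ Finset.Ico (2 ^ n - j) (2 ^ n), walsh k x := by
    unfold Dker
    rw [Finset.range_eq_Ico, Finset.range_eq_Ico]
    exact (Finset.sum_Ico_consecutive (fun k => walsh k x) (Nat.zero_le _) (Nat.sub_le _ _)).symm
  rw [← key, split]; ring

lemma sum_dker_eq_fker (k : ℕ) (x : G) :
    ∑ i ∈ Finset.Icc 1 k, Dker i x = (k : ℝ) * Fker k x := by
  rcases Nat.eq_zero_or_pos k with h | h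
  · simp [h]
  · rw [Fker]
    have : (k : ℝ) ≠ 0 := Nat.cast_ne_zero.2 (by omega)
    field_simp

lemma abel_sum (a d : ℕ → ℝ) (m : ℕ) :
    ∑ j ∈ Finset.Icc 1 m, a j * d j
      = a m * (∑ i ∈ Finset.Icc 1 m, d i)
        + ∑ j ∈ Finset.Icc 1 (m - 1), (a j - a (j + 1)) * (∑ i ∈ Finset.Icc 1 j, d i) := by
  induction m with
  | zero => simp
  | succ m ih =>
    rw [Finset.sum_Icc_succ_top (by omega : 1 ≤ m + 1), ih]
    cases m with
    | zero => simp
    | succ p =>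
      have e1 : p + 1 + 1 - 1 = p + 1 := rfl
      have e2 : p + 1 - 1 = p := rfl
      rw [e1, e2,
          Finset.sum_Icc_succ_top (by omega : 1 ≤ p + 1)
            (fun j => (a j - a (j + 1)) * (∑ i ∈ Finset.Icc 1 j, d i)),
          Finset.sum_Icc_succ_top (by omega : 1 ≤ p + 1 + 1) d]
      ring

theorem statement9 (n : ℕ) (t : ℕ → ℕ → ℝ) (x : G) :
    KT t (2 ^ n) x =
      Dker (2 ^ n) x * (∑ k ∈ Finset.Icc 1 (2 ^ n), t k (2 ^ n))
      - walsh (2 ^ n - 1) x * t 1 (2 ^ n) * ((2 : ℝ) ^ n - 1) * Fker (2 ^ n - 1) x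
      + walsh (2 ^ n - 1) x *
          (∑ k ∈ Finset.Icc 1 (2 ^ n - 2), deltaT t (2 ^ n - k - 1) (2 ^ n) * k * Fker k x) := by
  have h1 : 1 ≤ 2 ^ n := Nat.one_le_two_pow
  -- Step A: reindex k ↦ 2^n - k
  have stepA : KT t (2 ^ n) x
      = ∑ j ∈ Finset.range (2 ^ n), t (2 ^ n - j) (2 ^ n) * Dker (2 ^ n - j) x := by
    rw [KT]
    refine Finset.sum_nbij' (fun k => 2 ^ n - k) (fun j => 2 ^ n - j) ?_ ?_ ?_ ?_ ?_
    · intro k hk; have := Finset.mem_Icc.1 hk; simp only [Finset.mem_range]; omega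
    · intro j hj; have := Finset.mem_range.1 hj; simp only [Finset.mem_Icc]; omega
    · intro k hk; have := Finset.mem_Icc.1 hk
      show 2 ^ n - (2 ^ n - k) = k; omega
    · intro j hj; have := Finset.mem_range.1 hj
      show 2 ^ n - (2 ^ n - j) = j; omega
    · intro k hk; have := Finset.mem_Icc.1 hk
      have he : 2 ^ n - (2 ^ n - k) = k := by omega
      show t k (2 ^ n) * Dker k x = t (2 ^ n - (2 ^ n - k)) (2 ^ n) * Dker (2 ^ n - (2 ^ n - k)) x
      rw [he]
  rw [stepA]
  have stepB : ∀ j ∈ Finset.range (2 ^ n),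
      t (2 ^ n - j) (2 ^ n) * Dker (2 ^ n - j) x
        = t (2 ^ n - j) (2 ^ n) * Dker (2 ^ n) x
          - walsh (2 ^ n - 1) x * (t (2 ^ n - j) (2 ^ n) * Dker j x) := by
    intro j hj
    rw [dker_reflect n j (le_of_lt (Finset.mem_range.1 hj)) x]
    ring
  rw [Finset.sum_congr rfl stepB, Finset.sum_sub_distrib, ← Finset.sum_mul, ← Finset.mul_sum]
  -- first sum: reindex back
  have sum1 : ∑ j ∈ Finset.range (2 ^ n), t (2 ^ n - j) (2 ^ n)
      = ∑ k ∈ Finset.Icc 1 (2 ^ n), t k (2 ^ n) := by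
    refine Finset.sum_nbij' (fun j => 2 ^ n - j) (fun k => 2 ^ n - k) ?_ ?_ ?_ ?_ ?_
    · intro j hj; have := Finset.mem_range.1 hj; simp only [Finset.mem_Icc]; omega
    · intro k hk; have := Finset.mem_Icc.1 hk; simp only [Finset.mem_range]; omega
    · intro j hj; have := Finset.mem_range.1 hj
      show 2 ^ n - (2 ^ n - j) = j; omega
    · intro k hk; have := Finset.mem_Icc.1 hk
      show 2 ^ n - (2 ^ n - k) = k; omega
    · intro j hj; rfl
  rw [sum1]
  -- second sum: drop j = 0, then Abel summation
  have hins : Finset.range (2 ^ n) = insert 0 (Finset.Icc 1 (2 ^ n - 1)) := by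
    ext k
    simp only [Finset.mem_range, Finset.mem_insert, Finset.mem_Icc]
    omega
  have sum2 : ∑ j ∈ Finset.range (2 ^ n), t (2 ^ n - j) (2 ^ n) * Dker j x
      = ∑ j ∈ Finset.Icc 1 (2 ^ n - 1), t (2 ^ n - j) (2 ^ n) * Dker j x := by
    rw [hins, Finset.sum_insert (by simp)]
    simp [Dker]
  rw [sum2, abel_sum (fun j => t (2 ^ n - j) (2 ^ n)) (fun j => Dker j x) (2 ^ n - 1)]
  have ha : 2 ^ n - (2 ^ n - 1) = 1 := by omega
  rw [ha, sum_dker_eq_fker]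
  have hcast : ((2 ^ n - 1 : ℕ) : ℝ) = (2 : ℝ) ^ n - 1 := by
    push_cast [h1]; ring
  rw [hcast]
  have sum3 : ∑ j ∈ Finset.Icc 1 (2 ^ n - 1 - 1),
      (t (2 ^ n - j) (2 ^ n) - t (2 ^ n - (j + 1)) (2 ^ n)) * (∑ i ∈ Finset.Icc 1 j, Dker i x)
      = -∑ k ∈ Finset.Icc 1 (2 ^ n - 2), deltaT t (2 ^ n - k - 1) (2 ^ n) * k * Fker k x := by
    rw [← Finset.sum_neg_distrib]
    have he : 2 ^ n - 1 - 1 = 2 ^ n - 2 := by omega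
    rw [he]
    apply Finset.sum_congr rfl
    intro j hj
    have hj' := Finset.mem_Icc.1 hj
    rw [sum_dker_eq_fker, deltaT]
    have hb1 : 2 ^ n - j - 1 + 1 = 2 ^ n - j := by omega
    have hb2 : 2 ^ n - (j + 1) = 2 ^ n - j - 1 := by omega
    rw [hb1, if_pos (by omega), hb2]
    ring
  rw [sum3]
  ring
end
end

section
/- Let f ∈ L_p(G) for some 1 ≤ p < ∞ and n ∈ ℕ. Then ∫_G ‖f(·+u) − f(·)‖_p K_{2^n}(u) dμ(u) ≤ ω_p(f, 1/2^n) + Σ_{s=0}^{n−1} (2^s/2^n) ω_p(f, 1/2^s). -/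
open MeasureTheory
open scoped ENNReal

noncomputable section

/-! ### Auxiliary lemmas -/

section Aux

lemma zmod2_cases (a : ZMod 2) : a = 0 ∨ a = 1 := by revert a; decide

lemma rade_eq_one {k : ℕ} {x : G} (h : x k = 0) : rade k x = 1 := by
  simp [rade, h]

lemma rade_eq_neg_one {k : ℕ} {x : G} (h : x k ≠ 0) : rade k x = -1 := by
  rcases zmod2_cases (x k) with h0 | h1
  · exact absurd h0 h
  · have hv : (x k).val = 1 := by rw [h1]; decide
    rw [rade, hv, pow_one]

lemma abs_rade (k : ℕ) (x : G) : |rade k x| = 1 := by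
  rcases zmod2_cases (x k) with h | h
  · simp [rade_eq_one h]
  · have hne : x k ≠ 0 := by rw [h]; exact one_ne_zero
    simp [rade_eq_neg_one hne]

lemma walsh_eq_prod (m N : ℕ) (h : m < 2 ^ N) (x : G) :
    walsh m x = ∏ k ∈ Finset.range N, if m.testBit k then rade k x else 1 := by
  have key : ∀ A B : ℕ, m < 2 ^ A → A ≤ B →
      (∏ k ∈ Finset.range A, if m.testBit k then rade k x else 1)
        = ∏ k ∈ Finset.range B, if m.testBit k then rade k x else 1 := by
    intro A B hA hAB
    refine Finset.prod_subset (Finset.range_subset_range.2 hAB) ?_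
    intro k _ hk
    have hAk : A ≤ k := by simpa using hk
    have : m < 2 ^ k := lt_of_lt_of_le hA (Nat.pow_le_pow_right (by norm_num) hAk)
    simp [Nat.testBit_lt_two_pow this]
  rcases le_total (m + 1) N with hle | hle
  · exact key (m + 1) N ((Nat.lt_two_pow_self (n := m)).trans_le (Nat.pow_le_pow_right (by norm_num) (Nat.le_succ m))) hle
  · exact (key N (m + 1) h hle).symm

lemma abs_walsh (m : ℕ) (x : G) : |walsh m x| = 1 := by
  rw [walsh, Finset.abs_prod]
  refine Finset.prod_eq_one ?_
  intro k _
  by_cases h : m.testBit k <;> simp [h, abs_rade]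

lemma walsh_le_one (m : ℕ) (x : G) : walsh m x ≤ 1 :=
  le_trans (le_abs_self _) (abs_walsh m x).le

lemma walsh_two_pow_add {n i : ℕ} (h : i < 2 ^ n) (x : G) :
    walsh (2 ^ n + i) x = rade n x * walsh i x := by
  have h1 : 2 ^ n + i < 2 ^ (n + 1) := by
    have : 2 ^ (n + 1) = 2 ^ n + 2 ^ n := by ring
    omega
  rw [walsh_eq_prod _ (n + 1) h1, Finset.prod_range_succ, walsh_eq_prod i n h]
  have hbit : (2 ^ n + i).testBit n = true := by
    rw [Nat.testBit_two_pow_add_eq, Nat.testBit_lt_two_pow h]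
    rfl
  rw [hbit, if_pos rfl, mul_comm]
  congr 1
  refine Finset.prod_congr rfl ?_
  intro k hk
  rw [Nat.testBit_two_pow_add_gt (by simpa using hk)]

lemma dker_two_pow (n : ℕ) (x : G) :
    Dker (2 ^ n) x = ∏ k ∈ Finset.range n, (1 + rade k x) := by
  induction n with
  | zero => simp [Dker, walsh]
  | succ n ih =>
    have h2 : 2 ^ (n + 1) = 2 ^ n + 2 ^ n := by ring
    rw [h2, Dker, Finset.sum_range_add]
    have : ∀ i ∈ Finset.range (2 ^ n), walsh (2 ^ n + i) x = rade n x * walsh i x := by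
      intro i hi
      exact walsh_two_pow_add (by simpa using hi) x
    rw [Finset.sum_congr rfl this, ← Finset.mul_sum, Finset.prod_range_succ, ← ih]
    rw [Dker]
    ring

lemma dker_two_pow_of_mem {n : ℕ} {x : G} (h : ∀ i < n, x i = 0) :
    Dker (2 ^ n) x = 2 ^ n := by
  rw [dker_two_pow]
  have : ∀ k ∈ Finset.range n, (1 + rade k x) = 2 := by
    intro k hk
    rw [rade_eq_one (h k (by simpa using hk))]; norm_num
  rw [Finset.prod_congr rfl this, Finset.prod_const, Finset.card_range]

lemma dker_two_pow_of_not_mem {n i : ℕ} {x : G} (hi : i < n) (hx : x i ≠ 0) :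
    Dker (2 ^ n) x = 0 := by
  rw [dker_two_pow]
  refine Finset.prod_eq_zero (Finset.mem_range.2 hi) ?_
  rw [rade_eq_neg_one hx]; ring

lemma dker_le (k : ℕ) (x : G) : Dker k x ≤ k := by
  calc Dker k x ≤ ∑ j ∈ Finset.range k, (1 : ℝ) :=
        Finset.sum_le_sum fun j _ => walsh_le_one j x
    _ = k := by simp

/-- The sum `∑_{k=1}^{n} D_k = ∑_{k=0}^{n} D_k` (as `D_0 = 0`). -/
def Tker (n : ℕ) (x : G) : ℝ := ∑ k ∈ Finset.range (n + 1), Dker k x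

lemma fker_eq_tker (n : ℕ) (x : G) : Fker n x = (1 / n : ℝ) * Tker n x := by
  rw [Fker, Tker]
  congr 1
  refine Finset.sum_subset ?_ ?_
  · intro k hk
    simp only [Finset.mem_Icc] at hk
    simp only [Finset.mem_range]
    omega
  · intro k hk hk2
    simp only [Finset.mem_Icc, Finset.mem_range] at hk hk2
    have hk0 : k = 0 := by omega
    simp [hk0, Dker]

lemma dker_add {n j : ℕ} (hj : j ≤ 2 ^ n) (x : G) :
    Dker (2 ^ n + j) x = Dker (2 ^ n) x + rade n x * Dker j x := by
  rw [Dker, Finset.sum_range_add]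
  have : ∀ i ∈ Finset.range j, walsh (2 ^ n + i) x = rade n x * walsh i x := by
    intro i hi
    exact walsh_two_pow_add (lt_of_lt_of_le (by simpa using hi) hj) x
  rw [Finset.sum_congr rfl this, ← Finset.mul_sum]
  rfl

lemma tker_rec (n : ℕ) (x : G) :
    Tker (2 ^ (n + 1)) x
      = (1 + rade n x) * Tker (2 ^ n) x + 2 ^ n * Dker (2 ^ n) x := by
  have h2 : 2 ^ (n + 1) + 1 = (2 ^ n + 1) + 2 ^ n := by ring
  rw [Tker, h2, Finset.sum_range_add]
  have key : ∀ i ∈ Finset.range (2 ^ n),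
      Dker (2 ^ n + 1 + i) x = Dker (2 ^ n) x + rade n x * Dker (i + 1) x := by
    intro i hi
    have hi' : i < 2 ^ n := by simpa using hi
    have : 2 ^ n + 1 + i = 2 ^ n + (i + 1) := by ring
    rw [this, dker_add (by omega) x]
  rw [Finset.sum_congr rfl key, Finset.sum_add_distrib, Finset.sum_const, ← Finset.mul_sum]
  have hsum : ∑ i ∈ Finset.range (2 ^ n), Dker (i + 1) x = Tker (2 ^ n) x := by
    rw [Tker, Finset.sum_range_succ']
    simp [Dker]
  rw [hsum, Tker]
  simp only [Finset.card_range, nsmul_eq_mul]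
  push_cast
  ring

lemma tker_le (n : ℕ) (x : G) : Tker (2 ^ n) x ≤ 2 ^ n * 2 ^ n := by
  have hnat : (∑ k ∈ Finset.range (2 ^ n + 1), k) ≤ 2 ^ n * 2 ^ n := by
    have hS := Finset.sum_range_id_mul_two (2 ^ n + 1)
    rw [Nat.add_sub_cancel] at hS
    have ha : 1 ≤ 2 ^ n := Nat.one_le_two_pow
    nlinarith [hS, ha]
  calc Tker (2 ^ n) x ≤ ∑ k ∈ Finset.range (2 ^ n + 1), (k : ℝ) :=
        Finset.sum_le_sum fun k _ => dker_le k x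
    _ = ((∑ k ∈ Finset.range (2 ^ n + 1), k : ℕ) : ℝ) := by push_cast; rfl
    _ ≤ ((2 ^ n * 2 ^ n : ℕ) : ℝ) := by exact_mod_cast hnat
    _ = 2 ^ n * 2 ^ n := by push_cast; ring

open scoped Classical in
lemma tker_val {n s : ℕ} {x : G} (hs : s < n) (h0 : ∀ i < s, x i = 0) (hxs : x s ≠ 0) :
    Tker (2 ^ n) x
      = if (∀ i, s < i → i < n → x i = 0) then 2 ^ n * 2 ^ s / 2 else 0 := by
  induction n with
  | zero => omega
  | succ n ih =>
    rcases Nat.lt_succ_iff_lt_or_eq.1 hs with hs' | rfl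
    · -- s < n
      have hD : Dker (2 ^ n) x = 0 := dker_two_pow_of_not_mem hs' hxs
      rw [tker_rec, hD, ih hs']
      by_cases hxn : x n = 0
      · rw [rade_eq_one hxn]
        have hiff : (∀ i, s < i → i < n + 1 → x i = 0) ↔ (∀ i, s < i → i < n → x i = 0) := by
          constructor
          · intro h i h1 h2; exact h i h1 (by omega)
          · intro h i h1 h2
            rcases Nat.lt_succ_iff_lt_or_eq.1 h2 with h3 | rfl
            · exact h i h1 h3
            · exact hxn
        by_cases hP : ∀ i, s < i → i < n → x i = 0
        · rw [if_pos hP, if_pos (hiff.2 hP)]; ring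
        · rw [if_neg hP, if_neg (fun h => hP (hiff.1 h))]; ring
      · rw [rade_eq_neg_one hxn]
        have : ¬ (∀ i, s < i → i < n + 1 → x i = 0) := fun h => hxn (h n hs' (by omega))
        rw [if_neg this]; ring
    · -- s = n
      have hD : Dker (2 ^ s) x = 2 ^ s := dker_two_pow_of_mem h0
      rw [tker_rec, hD, rade_eq_neg_one hxs]
      have : ∀ i, s < i → i < s + 1 → x i = 0 := by intro i h1 h2; omega
      rw [if_pos this]
      ring

lemma fker_pow_le (n : ℕ) (x : G) : Fker (2 ^ n) x ≤ 2 ^ n := by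
  rw [fker_eq_tker]
  have hpos : (0 : ℝ) < (2 ^ n : ℕ) := by positivity
  have h1 : ((2 ^ n : ℕ) : ℝ) = (2 : ℝ) ^ n := by push_cast; ring
  rw [h1]
  calc (1 / (2:ℝ) ^ n) * Tker (2 ^ n) x ≤ (1 / (2:ℝ) ^ n) * (2 ^ n * 2 ^ n) := by
        refine mul_le_mul_of_nonneg_left (tker_le n x) (by positivity)
    _ = 2 ^ n := by field_simp

open scoped Classical in
lemma fker_pow_val {n s : ℕ} {x : G} (hs : s < n) (h0 : ∀ i < s, x i = 0) (hxs : x s ≠ 0) :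
    Fker (2 ^ n) x = if (∀ i, s < i → i < n → x i = 0) then 2 ^ s / 2 else 0 := by
  rw [fker_eq_tker, tker_val hs h0 hxs]
  have h1 : ((2 ^ n : ℕ) : ℝ) = (2 : ℝ) ^ n := by push_cast; ring
  rw [h1]
  have hpos : (0:ℝ) < 2 ^ n := by positivity
  by_cases hP : ∀ i, s < i → i < n → x i = 0
  · rw [if_pos hP, if_pos hP]; field_simp
  · rw [if_neg hP, if_neg hP]; ring

/-! ### Measure-theoretic lemmas -/

/-- Cylinder sets. -/
def Cyl (v : G) (n : ℕ) : Set G := {u | ∀ i < n, u i = v i}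

lemma isOpen_coord (i : ℕ) (c : ZMod 2) : IsOpen {u : G | u i = c} := by
  have : {u : G | u i = c} = (fun u : G => u i) ⁻¹' {c} := rfl
  rw [this]
  exact (continuous_apply i).isOpen_preimage _ (isOpen_discrete _)

lemma measurableSet_Cyl (v : G) (n : ℕ) : MeasurableSet (Cyl v n) := by
  have : Cyl v n = ⋂ i ∈ Set.Iio n, {u : G | u i = v i} := by
    ext u; simp [Cyl]
  rw [this]
  exact MeasurableSet.biInter (Set.to_countable _)
    (fun i _ => (isOpen_coord i (v i)).measurableSet)

lemma Iset_eq_Cyl (n : ℕ) : Iset n = Cyl 0 n := rfl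

lemma measurableSet_Iset (n : ℕ) : MeasurableSet (Iset n) :=
  measurableSet_Cyl 0 n

instance : haarG.IsAddLeftInvariant := by
  unfold haarG; infer_instance

lemma haarG_univ : haarG Set.univ = 1 :=
  Measure.addHaarMeasure_self (K₀ := ⟨⟨Set.univ, isCompact_univ⟩, by simp⟩)

lemma measure_Cyl_eq (v : G) (n : ℕ) : haarG (Cyl v n) = haarG (Iset n) := by
  have h : Cyl v n = (fun u : G => v + u) ⁻¹' (Iset n) := by
    ext u
    simp only [Cyl, Iset, Set.mem_setOf_eq, Set.mem_preimage, Pi.add_apply]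
    constructor
    · intro h i hi
      have h2 : ∀ a b : ZMod 2, b = a → a + b = 0 := by decide
      exact h2 _ _ (h i hi)
    · intro h i hi
      have h2 : ∀ a b : ZMod 2, a + b = 0 → b = a := by decide
      exact h2 _ _ (h i hi)
  rw [h, measure_preimage_add]

lemma measure_Iset (n : ℕ) : haarG (Iset n) = 2⁻¹ ^ n := by
  induction n with
  | zero =>
    have : Iset 0 = Set.univ := by ext u; simp [Iset]
    rw [this, haarG_univ]; simp
  | succ n ih =>
    have hsplit : Iset n = Iset (n + 1) ∪ Cyl (eG n) (n + 1) := by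
      ext u
      simp only [Iset, Cyl, Set.mem_setOf_eq, Set.mem_union, eG]
      constructor
      · intro h
        rcases zmod2_cases (u n) with h0 | h1
        · left; intro i hi
          rcases Nat.lt_succ_iff_lt_or_eq.1 hi with h2 | rfl
          · exact h i h2
          · exact h0
        · right; intro i hi
          rcases Nat.lt_succ_iff_lt_or_eq.1 hi with h2 | rfl
          · rw [h i h2, if_neg (by omega)]
          · rw [h1, if_pos rfl]
      · rintro (h | h) i hi
        · exact h i (by omega)
        · rw [h i (by omega), if_neg (by omega)]
    have hdisj : Disjoint (Iset (n + 1)) (Cyl (eG n) (n + 1)) := by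
      rw [Set.disjoint_left]
      intro u hu hu2
      have h1 : u n = 0 := hu n (by omega)
      have h2 : u n = 1 := by
        have := hu2 n (by omega)
        simpa [eG] using this
      rw [h1] at h2
      exact absurd h2 (by decide)
    have hm : haarG (Iset n) = haarG (Iset (n + 1)) + haarG (Cyl (eG n) (n + 1)) := by
      rw [hsplit, measure_union hdisj (measurableSet_Cyl _ _)]
    rw [measure_Cyl_eq, ih] at hm
    have h2 : (2 : ℝ≥0∞) * haarG (Iset (n + 1)) = 2⁻¹ ^ n := by
      rw [two_mul]; exact hm.symm
    calc haarG (Iset (n + 1)) = 2⁻¹ * (2 * haarG (Iset (n + 1))) := by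
          rw [← mul_assoc, ENNReal.inv_mul_cancel (by norm_num) (by norm_num), one_mul]
      _ = 2⁻¹ ^ (n + 1) := by rw [h2, pow_succ, mul_comm]

lemma measure_Cyl (v : G) (n : ℕ) : haarG (Cyl v n) = 2⁻¹ ^ n := by
  rw [measure_Cyl_eq, measure_Iset]

lemma measure_singleton_G (z : G) : haarG {z} = 0 := by
  by_contra h
  obtain ⟨m, hm⟩ := ENNReal.exists_inv_two_pow_lt h
  have hsub : {z} ⊆ Cyl z m := by
    intro u hu
    rw [Set.mem_singleton_iff] at hu
    subst hu
    intro i _; rfl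
  have := (measure_mono hsub).trans_eq (measure_Cyl z m)
  exact absurd (lt_of_lt_of_le hm this) (lt_irrefl _)

/-- Tail norm bound: if `u ∈ I_s` and some coordinate `j ≥ s` vanishes,
then `|u| < 1/2^s`. -/
lemma normG_lt_of {s : ℕ} {u : G} (hu : ∀ i < s, u i = 0)
    {j : ℕ} (hj : s ≤ j) (huj : u j = 0) : normG u < 1 / 2 ^ s := by
  set g : ℕ → ℝ := fun i => if i < s then 0 else (1 / 2 : ℝ) ^ (i + 1) with hg
  have hterm : ∀ i : ℕ, ((u i).val : ℝ) / 2 ^ (i + 1) ≤ g i := by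
    intro i
    by_cases hi : i < s
    · rw [hg]; simp only [if_pos hi]
      rw [hu i hi]; simp
    · rw [hg]; simp only [if_neg hi]
      have hv : (u i).val ≤ 1 := by have := ZMod.val_lt (u i); omega
      have h1 : ((u i).val : ℝ) ≤ 1 := by exact_mod_cast hv
      rw [div_pow, one_pow]
      gcongr
  have hnn : ∀ i : ℕ, (0 : ℝ) ≤ ((u i).val : ℝ) / 2 ^ (i + 1) := by
    intro i; positivity
  have hgsummable : Summable g := by
    refine Summable.of_nonneg_of_le ?_ ?_ (summable_geometric_of_lt_one
      (by norm_num : (0:ℝ) ≤ 1/2) (by norm_num))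
    · intro i; rw [hg]; dsimp only; positivity
    · intro i; rw [hg]; dsimp only
      by_cases hi : i < s
      · rw [if_pos hi]; positivity
      · rw [if_neg hi]
        exact pow_le_pow_of_le_one (by norm_num) (by norm_num) (by omega)
  have hstrict : ((u j).val : ℝ) / 2 ^ (j + 1) < g j := by
    rw [huj, hg]; dsimp only
    rw [if_neg (by omega)]
    simp only [ZMod.val_zero, Nat.cast_zero, zero_div]
    positivity
  have hlt : normG u < ∑' i, g i :=
    Summable.tsum_lt_tsum_of_nonneg hnn hterm hstrict hgsummable
  have hgs : ∑' i, g i = 1 / 2 ^ s := by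
    rw [← Summable.sum_add_tsum_nat_add s hgsummable]
    have h1 : ∑ i ∈ Finset.range s, g i = 0 := by
      refine Finset.sum_eq_zero fun i hi => ?_
      rw [hg]; dsimp only
      rw [if_pos (by simpa using hi)]
    have h2 : ∀ i : ℕ, g (i + s) = (1/2 : ℝ) ^ (s + 1) * (1/2) ^ i := by
      intro i
      rw [hg]; dsimp only
      rw [if_neg (by omega), ← pow_add]
      congr 1; omega
    rw [h1, zero_add, tsum_congr h2, tsum_mul_left,
      tsum_geometric_of_lt_one (by norm_num) (by norm_num)]
    rw [div_pow, one_pow]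
    norm_num
    rw [pow_succ]
    field_simp
  rw [hgs] at hlt
  exact hlt

/-- The point of `I_s` with all coordinates `1` from `s` on. -/
def zOnes (s : ℕ) : G := fun i => if i < s then 0 else 1

lemma normG_lt_of_ne {s : ℕ} {u : G} (hu : ∀ i < s, u i = 0) (hne : u ≠ zOnes s) :
    normG u < 1 / 2 ^ s := by
  obtain ⟨j, hj⟩ : ∃ j, u j ≠ zOnes s j := Function.ne_iff.1 hne
  by_cases hjs : j < s
  · exact absurd (by rw [hu j hjs, zOnes, if_pos hjs]) hj
  · refine normG_lt_of hu (le_of_not_gt hjs) ?_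
    rw [zOnes, if_neg hjs] at hj
    rcases zmod2_cases (u j) with h | h
    · exact h
    · exact absurd h hj

lemma ae_ne_zOnes (s : ℕ) : ∀ᵐ u ∂haarG, u ≠ zOnes s := by
  have h0 : haarG {u : G | ¬ u ≠ zOnes s} = 0 := by
    have : {u : G | ¬ u ≠ zOnes s} = {zOnes s} := by
      ext u; simp [Set.mem_singleton_iff]
    rw [this]
    exact measure_singleton_G _
  exact h0

lemma eLpNorm_le_omegaP {p : ℝ≥0∞} {f : G → ℝ} {u : G} {δ : ℝ} (h : normG u < δ) :
    eLpNorm (fun x => f (x + u) - f x) p haarG ≤ omegaP p f δ := by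
  unfold omegaP
  exact le_iSup₂ (f := fun (t : G) (_ : normG t < δ) =>
    eLpNorm (fun x => f (x + t) - f x) p haarG) u h

end Aux

theorem statement11 (p : ℝ≥0∞) (hp1 : 1 ≤ p) (hp2 : p ≠ ∞) (f : G → ℝ)
    (hf : MemLp f p haarG) (n : ℕ) :
    ∫⁻ u, eLpNorm (fun x => f (x + u) - f x) p haarG
        * ENNReal.ofReal (Fker (2 ^ n) u) ∂haarG ≤
      omegaP p f (1 / 2 ^ n)
        + ∑ s ∈ Finset.range n, ((2 : ℝ≥0∞) ^ s / 2 ^ n) * omegaP p f (1 / 2 ^ s) := by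
  classical
  set F : G → ℝ≥0∞ := fun u =>
    eLpNorm (fun x => f (x + u) - f x) p haarG * ENNReal.ofReal (Fker (2 ^ n) u) with hF
  have region_bound : ∀ (S : Set G) (s : ℕ) (C : ℝ≥0∞), MeasurableSet S →
      (∀ u ∈ S, ∀ i < s, u i = 0) →
      (∀ u ∈ S, ENNReal.ofReal (Fker (2 ^ n) u) ≤ C) →
      ∫⁻ u in S, F u ∂haarG ≤ omegaP p f (1 / 2 ^ s) * C * haarG S := by
    intro S s C hS hcoord hK
    have hmono : ∀ᵐ u ∂(haarG.restrict S), F u ≤ omegaP p f (1 / 2 ^ s) * C := by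
      filter_upwards [ae_restrict_mem hS, ae_restrict_of_ae (ae_ne_zOnes s)] with u huS hune
      have h1 : eLpNorm (fun x => f (x + u) - f x) p haarG ≤ omegaP p f (1 / 2 ^ s) :=
        eLpNorm_le_omegaP (normG_lt_of_ne (hcoord u huS) hune)
      exact mul_le_mul' h1 (hK u huS)
    calc ∫⁻ u in S, F u ∂haarG ≤ ∫⁻ _ in S, (omegaP p f (1 / 2 ^ s) * C) ∂haarG :=
          lintegral_mono_ae hmono
      _ = omegaP p f (1 / 2 ^ s) * C * haarG S := setLIntegral_const S _
  have hsub : ∀ m : ℕ, Iset (m + 1) ⊆ Iset m := by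
    intro m u hu i hi; exact hu i (by omega)
  have hsplit : ∀ m : ℕ, ∫⁻ u, F u ∂haarG
      = ∫⁻ u in Iset m, F u ∂haarG
        + ∑ s ∈ Finset.range m, ∫⁻ u in (Iset s \ Iset (s + 1)), F u ∂haarG := by
    intro m
    induction m with
    | zero =>
      have h0 : Iset 0 = Set.univ := by ext u; simp [Iset]
      simp [h0]
    | succ m ih =>
      rw [ih, Finset.sum_range_succ]
      have hu : Iset (m + 1) ∪ (Iset m \ Iset (m + 1)) = Iset m :=
        Set.union_diff_cancel (hsub m)
      have hstep := lintegral_union (f := F) (μ := haarG)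
        ((measurableSet_Iset m).diff (measurableSet_Iset (m + 1))) Set.disjoint_sdiff_right
      rw [hu] at hstep
      rw [hstep]
      ring
  have hpow : ∀ k : ℕ, ENNReal.ofReal ((2:ℝ) ^ k) = (2 : ℝ≥0∞) ^ k := by
    intro k
    rw [ENNReal.ofReal_pow (by norm_num)]
    norm_num
  have hA : ∫⁻ u in Iset n, F u ∂haarG ≤ omegaP p f (1 / 2 ^ n) := by
    have h := region_bound (Iset n) n ((2:ℝ≥0∞) ^ n) (measurableSet_Iset n)
      (fun u hu i hi => hu i hi)
      (fun u _ => by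
        calc ENNReal.ofReal (Fker (2 ^ n) u) ≤ ENNReal.ofReal ((2:ℝ) ^ n) :=
              ENNReal.ofReal_le_ofReal (fker_pow_le n u)
          _ = (2:ℝ≥0∞) ^ n := hpow n)
    refine h.trans ?_
    rw [measure_Iset]
    have h1 : (2:ℝ≥0∞) ^ n * 2⁻¹ ^ n = 1 := by
      rw [← ENNReal.inv_pow]
      exact ENNReal.mul_inv_cancel (pow_ne_zero n (by norm_num))
        (ENNReal.pow_ne_top (by norm_num))
    rw [mul_assoc, h1, mul_one]
  have hB : ∀ s ∈ Finset.range n, ∫⁻ u in (Iset s \ Iset (s + 1)), F u ∂haarG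
      ≤ (2:ℝ≥0∞) ^ s / 2 ^ n * omegaP p f (1 / 2 ^ s) := by
    intro s hs
    have hsn : s < n := Finset.mem_range.1 hs
    set E : Set G := {u : G | ∀ i, s < i → i < n → u i = 0} with hE
    have hEm : MeasurableSet E := by
      have hEeq : E = ⋂ i ∈ {i : ℕ | s < i ∧ i < n}, {u : G | u i = 0} := by
        ext u
        simp only [hE, Set.mem_setOf_eq, Set.mem_iInter]
        constructor
        · intro h i hi; exact h i hi.1 hi.2
        · intro h i h1 h2; exact h i ⟨h1, h2⟩
      rw [hEeq]
      exact MeasurableSet.biInter (Set.to_countable _)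
        (fun i _ => (isOpen_coord i 0).measurableSet)
    set B : Set G := Iset s \ Iset (s + 1) with hBdef
    have hBm : MeasurableSet B := (measurableSet_Iset s).diff (measurableSet_Iset (s + 1))
    have hB0 : ∀ u ∈ B, (∀ i < s, u i = 0) ∧ u s ≠ 0 := by
      intro u hu
      obtain ⟨h1, h2⟩ := hu
      refine ⟨fun i hi => h1 i hi, fun hus => h2 ?_⟩
      intro i hi
      rcases Nat.lt_succ_iff_lt_or_eq.1 hi with h | rfl
      · exact h1 i h
      · exact hus
    have hd : Disjoint (B ∩ E) (B \ E) :=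
      Set.disjoint_sdiff_right.mono_left Set.inter_subset_right
    have hsplit2 : ∫⁻ u in B, F u ∂haarG
        = ∫⁻ u in B ∩ E, F u ∂haarG + ∫⁻ u in B \ E, F u ∂haarG := by
      have h := lintegral_union (f := F) (μ := haarG) (hBm.diff hEm) hd
      rw [Set.inter_union_diff] at h
      exact h
    have hzero : ∫⁻ u in B \ E, F u ∂haarG = 0 := by
      have hae : ∀ᵐ u ∂(haarG.restrict (B \ E)), F u = 0 := by
        filter_upwards [ae_restrict_mem (hBm.diff hEm)] with u hu
        obtain ⟨huB, huE⟩ := hu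
        obtain ⟨h0, hxs⟩ := hB0 u huB
        have hfk : Fker (2 ^ n) u = 0 := by
          rw [fker_pow_val hsn h0 hxs, if_neg (by simpa [hE] using huE)]
        simp [hF, hfk]
      exact (lintegral_congr_ae hae).trans lintegral_zero
    have hone : ∫⁻ u in B ∩ E, F u ∂haarG
        ≤ omegaP p f (1 / 2 ^ s) * (2:ℝ≥0∞) ^ s * haarG (B ∩ E) := by
      refine region_bound (B ∩ E) s _ (hBm.inter hEm)
        (fun u hu i hi => (hB0 u hu.1).1 i hi) ?_
      intro u hu
      obtain ⟨h0, hxs⟩ := hB0 u hu.1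
      have huE : ∀ i, s < i → i < n → u i = 0 := hu.2
      have hfv : Fker (2 ^ n) u = 2 ^ s / 2 := by
        rw [fker_pow_val hsn h0 hxs, if_pos huE]
      rw [hfv]
      calc ENNReal.ofReal ((2:ℝ) ^ s / 2)
          ≤ ENNReal.ofReal ((2:ℝ) ^ s) :=
            ENNReal.ofReal_le_ofReal (by
              have : (0:ℝ) ≤ (2:ℝ) ^ s := by positivity
              linarith [div_le_self this (by norm_num : (1:ℝ) ≤ 2)])
        _ = (2:ℝ≥0∞) ^ s := hpow s
    have hmeas : haarG (B ∩ E) ≤ 2⁻¹ ^ n := by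
      refine (measure_mono ?_).trans_eq (measure_Cyl (eG s) n)
      intro u hu
      obtain ⟨h0, hxs⟩ := hB0 u hu.1
      intro i hi
      rcases lt_trichotomy i s with h | rfl | h
      · rw [h0 i h, eG, if_neg (by omega)]
      · rw [eG, if_pos rfl]
        rcases zmod2_cases (u i) with h | h
        · exact absurd h hxs
        · exact h
      · rw [hu.2 i h hi, eG, if_neg (by omega)]
    calc ∫⁻ u in B, F u ∂haarG
        = ∫⁻ u in B ∩ E, F u ∂haarG := by rw [hsplit2, hzero, add_zero]
      _ ≤ omegaP p f (1 / 2 ^ s) * (2:ℝ≥0∞) ^ s * haarG (B ∩ E) := hone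
      _ ≤ omegaP p f (1 / 2 ^ s) * (2:ℝ≥0∞) ^ s * 2⁻¹ ^ n := mul_le_mul_right hmeas _
      _ = (2:ℝ≥0∞) ^ s / 2 ^ n * omegaP p f (1 / 2 ^ s) := by
          rw [ENNReal.div_eq_inv_mul, ← ENNReal.inv_pow]
          ring
  calc ∫⁻ u, F u ∂haarG
      = ∫⁻ u in Iset n, F u ∂haarG
        + ∑ s ∈ Finset.range n, ∫⁻ u in (Iset s \ Iset (s + 1)), F u ∂haarG := hsplit n
    _ ≤ omegaP p f (1 / 2 ^ n)
        + ∑ s ∈ Finset.range n, ((2:ℝ≥0∞) ^ s / 2 ^ n) * omegaP p f (1 / 2 ^ s) :=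
        add_le_add hA (Finset.sum_le_sum hB)
end
end
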